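/- Let p be a prime, A an 𝔽_p-algebra, and {x^{[i]} : 0 ≤ i < p^n} an iterative sequence in A. Then: (1) for each 1 ≤ i ≤ p^n−1 with p-adic expansion i = Σ_k i_k p^k (0 ≤ i_k < p), one has x^{[i]} = Π_k (x^{[p^k]})^{i_k}/i_k!; (2) (x^{[p^j]})^p = 0 for each 0 ≤ j ≤ n−1; (3) x^{[0]}·x^{[p^j]} = x^{[p^j]} for each j and x^{[0]}·x^{[0]} = x^{[0]}. Conversely, given pairwise commuting elements x^{[0]}, x^{[p^0]}, …, x^{[p^{n−1}]} of A satisfying the conditions of (2) and (3), the elements x^{[i]} defined by the formula in (1) form an iterative sequence. -/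

import Mathlib

open Nat Finset

namespace Stmt13Aux

variable {p : ℕ}

lemma dig_mod {m k : ℕ} (hk : k < m) (i : ℕ) :
    (i % p ^ m) / p ^ k % p = i / p ^ k % p := by
  rw [← Nat.mod_mul_right_div_self, ← Nat.mod_mul_right_div_self,
    Nat.mod_mod_of_dvd _ (by rw [← pow_succ] ; exact pow_dvd_pow p (by omega))]

lemma dig_high {m k i : ℕ} (hp : 0 < p) (hi : i < p ^ m) (hk : m ≤ k) :
    i / p ^ k % p = 0 := by
  rw [Nat.div_eq_of_lt (lt_of_lt_of_le hi (Nat.pow_le_pow_right hp hk))]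
  simp

lemma dig_mul_pow {m k a : ℕ} (hp : 0 < p) (hk : k < m) : a * p ^ m / p ^ k % p = 0 := by
  have h1 : a * p ^ m / p ^ k = a * p ^ (m - k) := by
    conv_lhs => rw [show m = (m - k) + k by omega, pow_add, ← mul_assoc,
      Nat.mul_div_cancel _ (show 0 < p ^ k by positivity)]
  rw [h1]
  have h2 : p ∣ a * p ^ (m - k) := Dvd.dvd.mul_left (dvd_pow_self p (by omega)) a
  omega

lemma dig_add_low {m k r d : ℕ} (hk : k < m) :
    (r + d * p ^ m) / p ^ k % p = r / p ^ k % p := by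
  rw [← Nat.mod_mul_right_div_self, ← Nat.mod_mul_right_div_self]
  have h1 : p ^ k * p = p ^ (k+1) := by rw [pow_succ]
  rw [h1]
  have h2 : d * p ^ m = (d * p ^ (m - (k+1))) * p ^ (k+1) := by
    rw [mul_assoc, ← pow_add, show m - (k+1) + (k+1) = m by omega]
  rw [h2, Nat.add_mul_mod_self_right]

lemma div_pow_top {m r d : ℕ} (hp : 0 < p) (hr : r < p ^ m) :
    (r + d * p ^ m) / p ^ m = d := by
  rw [Nat.add_mul_div_right _ _ (by positivity), Nat.div_eq_of_lt hr, zero_add]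

lemma carryfree {i j : ℕ} (hp : 1 < p) (h : ∀ k, i / p ^ k % p + j / p ^ k % p < p) :
    ∀ k, i % p ^ k + j % p ^ k < p ^ k := by
  intro k
  induction k with
  | zero => simp [Nat.mod_one]
  | succ k ih =>
    rw [Nat.mod_pow_succ, Nat.mod_pow_succ]
    have h1 : i / p ^ k % p + j / p ^ k % p ≤ p - 1 := by have := h k; omega
    have h2 : p ^ k * (i / p ^ k % p) + p ^ k * (j / p ^ k % p) ≤ p ^ k * (p - 1) := by
      rw [← Nat.mul_add]; exact Nat.mul_le_mul_left _ h1
    have h3 : p ^ k * (p - 1) + p ^ k * 1 = p ^ k * p := by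
      rw [← Nat.mul_add]; congr 1; omega
    have h4 : p ^ (k+1) = p ^ k * p := pow_succ p k
    omega

lemma div_add_of_carryfree {i j : ℕ} (hp : 1 < p) (h : ∀ k, i / p ^ k % p + j / p ^ k % p < p) :
    ∀ k, (i + j) / p ^ k = i / p ^ k + j / p ^ k := by
  intro k
  have hc := carryfree hp h k
  have h1 := Nat.div_add_mod i (p ^ k)
  have h2 := Nat.div_add_mod j (p ^ k)
  have h3 : i + j = p ^ k * (i / p ^ k + j / p ^ k) + (i % p ^ k + j % p ^ k) := by
    rw [Nat.mul_add]; omega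
  rw [h3, Nat.mul_add_div (by positivity), Nat.div_eq_of_lt hc, add_zero]

lemma dig_add_of_carryfree {i j : ℕ} (hp : 1 < p) (h : ∀ k, i / p ^ k % p + j / p ^ k % p < p) :
    ∀ k, (i + j) / p ^ k % p = i / p ^ k % p + j / p ^ k % p := by
  intro k
  rw [div_add_of_carryfree hp h k]
  have e1 : i / p ^ k = p * (i / p ^ (k+1)) + i / p ^ k % p := by
    have := Nat.div_add_mod (i / p ^ k) p
    rw [Nat.div_div_eq_div_mul, ← pow_succ] at this; omega
  have e2 : j / p ^ k = p * (j / p ^ (k+1)) + j / p ^ k % p := by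
    have := Nat.div_add_mod (j / p ^ k) p
    rw [Nat.div_div_eq_div_mul, ← pow_succ] at this; omega
  conv_lhs => rw [e1, e2]
  rw [show p * (i / p ^ (k+1)) + i / p ^ k % p + (p * (j / p ^ (k+1)) + j / p ^ k % p)
      = (i / p ^ k % p + j / p ^ k % p) + (i / p ^ (k+1) + j / p ^ (k+1)) * p by ring,
    Nat.add_mul_mod_self_right, Nat.mod_eq_of_lt (h k)]

lemma add_lt_of_carryfree {i j n : ℕ} (hp : 1 < p) (hi : i < p ^ n) (hj : j < p ^ n)
    (h : ∀ k, i / p ^ k % p + j / p ^ k % p < p) : i + j < p ^ n := by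
  have hd := div_add_of_carryfree hp h n
  rw [Nat.div_eq_of_lt hi, Nat.div_eq_of_lt hj] at hd
  have hpos : 0 < p ^ n := by positivity
  exact (Nat.div_eq_zero_iff.mp hd).resolve_left (by omega)

lemma pos_digit_exists {i n : ℕ} (hp : 1 < p) (hi : 1 ≤ i) (hin : i < p ^ n) :
    ∃ k < n, i / p ^ k % p ≠ 0 := by
  by_contra hc
  push_neg at hc
  have key : ∀ m, m ≤ n → i % p ^ m = 0 := by
    intro m hm
    induction m with
    | zero => simp [Nat.mod_one]
    | succ m ih =>
      rw [Nat.mod_pow_succ, ih (by omega), hc m (by omega), zero_add, mul_zero]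
  have := key n le_rfl
  rw [Nat.mod_eq_of_lt hin] at this
  omega

end Stmt13Aux

namespace Stmt13Aux2
open Stmt13Aux

variable {p : ℕ} [hp : Fact p.Prime]

/-- cast version of iterated Lucas -/
lemma lucas_prod (a n k : ℕ) :
    ((n.choose k : ℕ) : ZMod p) = ((n / p ^ a).choose (k / p ^ a) : ℕ) *
      ∏ i ∈ range a, (((n / p ^ i % p).choose (k / p ^ i % p) : ℕ) : ZMod p) := by
  have h := Choose.choose_modEq_choose_mul_prod_range_choose (p := p) (n := n) (k := k) a
  rw [← ZMod.intCast_eq_intCast_iff] at h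
  push_cast at h
  exact h

lemma choose_add_high_digit {m r d : ℕ} (hr : r < p ^ m) (hd : d < p) :
    (((r + d * p ^ m).choose r : ℕ) : ZMod p) = 1 := by
  have hp1 : 1 < p := hp.out.one_lt
  rw [lucas_prod (m + 1)]
  have hlt : r + d * p ^ m < p ^ (m + 1) := by
    have : d * p ^ m ≤ (p - 1) * p ^ m := Nat.mul_le_mul_right _ (by omega)
    have h2 : (p - 1) * p ^ m + p ^ m = p ^ (m+1) := by
      rw [pow_succ, mul_comm (p ^ m) p, ← Nat.succ_mul, show (p-1).succ = p from by omega]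
    omega
  rw [Nat.div_eq_of_lt hlt, Nat.div_eq_of_lt (lt_of_lt_of_le hr
    (Nat.pow_le_pow_right (by omega) (by omega))), Nat.choose_self]
  rw [Finset.prod_congr rfl (fun i hi => ?_), Finset.prod_const_one, mul_one, Nat.cast_one]
  rw [mem_range] at hi
  rcases Nat.lt_or_ge i m with h | h
  · rw [dig_add_low h, Nat.choose_self, Nat.cast_one]
  · have him : i = m := by omega
    subst him
    rw [← Nat.mod_mul_right_div_self, ← pow_succ,
      Nat.mod_eq_of_lt hlt, div_pow_top (by omega) hr,
      Nat.div_eq_of_lt hr, Nat.zero_mod, Nat.choose_zero_right, Nat.cast_one]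

lemma choose_mul_pow {m a b : ℕ} :
    (((a * p ^ m).choose (b * p ^ m) : ℕ) : ZMod p) = ((a.choose b : ℕ) : ZMod p) := by
  have hp1 : 1 < p := hp.out.one_lt
  rw [lucas_prod m, Nat.mul_div_cancel _ (show 0 < p ^ m by positivity),
    Nat.mul_div_cancel _ (show 0 < p ^ m by positivity)]
  rw [Finset.prod_congr rfl (fun i hi => ?_), Finset.prod_const_one, mul_one]
  rw [mem_range] at hi
  rw [dig_mul_pow (by omega) hi, dig_mul_pow (by omega) hi, Nat.choose_self, Nat.cast_one]

lemma choose_carryfree {i j n : ℕ} (hi : i < p ^ n) (hj : j < p ^ n)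
    (h : ∀ k, i / p ^ k % p + j / p ^ k % p < p) :
    (((i + j).choose i : ℕ) : ZMod p) =
      ∏ k ∈ range n, (((i / p ^ k % p + j / p ^ k % p).choose (i / p ^ k % p) : ℕ) : ZMod p) := by
  have hp1 : 1 < p := hp.out.one_lt
  have hij : i + j < p ^ n := add_lt_of_carryfree hp1 hi hj h
  rw [lucas_prod n, Nat.div_eq_of_lt hij, Nat.div_eq_of_lt hi, Nat.choose_self, Nat.cast_one,
    one_mul]
  exact Finset.prod_congr rfl fun k _ => by rw [dig_add_of_carryfree hp1 h k]

lemma choose_overflow {i j k : ℕ} (h : p ≤ i / p ^ k % p + j / p ^ k % p) :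
    (((i + j).choose i : ℕ) : ZMod p) = 0 := by
  rw [ZMod.natCast_eq_zero_iff]
  -- p ∣ (i+j).choose i via Kummer
  have hp' := hp.out
  set b := Nat.log p (j + i) + k + 2 with hb
  have hlog : Nat.log p (j + i) < b := by omega
  have hkum := hp'.emultiplicity_choose' (n := j) (k := i) hlog
  have hmem : k + 1 ∈ filter (fun t => p ^ t ≤ i % p ^ t + j % p ^ t) (Ico 1 b) := by
    rw [mem_filter, mem_Ico]
    refine ⟨⟨by omega, by omega⟩, ?_⟩
    calc p ^ (k+1) = p ^ k * p := pow_succ p k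
    _ ≤ p ^ k * (i / p ^ k % p + j / p ^ k % p) := Nat.mul_le_mul_left _ h
    _ = p ^ k * (i / p ^ k % p) + p ^ k * (j / p ^ k % p) := by rw [Nat.mul_add]
    _ ≤ (i % p ^ k + p ^ k * (i / p ^ k % p)) + (j % p ^ k + p ^ k * (j / p ^ k % p)) :=
      Nat.add_le_add (Nat.le_add_left _ _) (Nat.le_add_left _ _)
    _ = i % p ^ (k+1) + j % p ^ (k+1) := by rw [Nat.mod_pow_succ, Nat.mod_pow_succ]
  have hcard : 1 ≤ #(filter (fun t => p ^ t ≤ i % p ^ t + j % p ^ t) (Ico 1 b)) :=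
    Finset.card_pos.mpr ⟨_, hmem⟩
  have hdvd : p ^ 1 ∣ (j + i).choose i := by
    rw [pow_dvd_iff_le_emultiplicity, hkum]
    exact_mod_cast hcard
  rw [Nat.add_comm i j]
  simpa using hdvd

lemma fact_inv_mul_fact_inv {a b : ℕ} (hab : a + b < p) :
    ((a.factorial : ZMod p))⁻¹ * ((b.factorial : ZMod p))⁻¹ =
      (((a + b).choose a : ℕ) : ZMod p) * (((a + b).factorial : ZMod p))⁻¹ := by
  have ha : ((a.factorial : ℕ) : ZMod p) ≠ 0 := by
    rw [Ne, ZMod.natCast_eq_zero_iff, hp.out.dvd_factorial]; omega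
  have hb : ((b.factorial : ℕ) : ZMod p) ≠ 0 := by
    rw [Ne, ZMod.natCast_eq_zero_iff, hp.out.dvd_factorial]; omega
  have hab' : (((a + b).factorial : ℕ) : ZMod p) ≠ 0 := by
    rw [Ne, ZMod.natCast_eq_zero_iff, hp.out.dvd_factorial]; omega
  have key : (((a+b).choose a : ℕ) : ZMod p) * a.factorial * b.factorial
      = ((a+b).factorial : ZMod p) := by
    have h0 := Nat.choose_mul_factorial_mul_factorial (show a ≤ a + b by omega)
    rw [Nat.add_sub_cancel_left] at h0
    exact_mod_cast congrArg (Nat.cast (R := ZMod p)) h0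
  rw [eq_mul_inv_iff_mul_eq₀ hab', ← key,
    show ((a.factorial : ZMod p))⁻¹ * ((b.factorial : ZMod p))⁻¹ *
        ((((a+b).choose a : ℕ) : ZMod p) * a.factorial * b.factorial)
      = (((a+b).choose a : ℕ) : ZMod p) * (((a.factorial : ZMod p))⁻¹ * a.factorial) *
        (((b.factorial : ZMod p))⁻¹ * b.factorial) from by ring,
    inv_mul_cancel₀ ha, inv_mul_cancel₀ hb, mul_one, mul_one]

end Stmt13Aux2

open Stmt13Aux Stmt13Aux2

/-- An iterative sequence `{x^{[i]} : 0 ≤ i < p^n}` in a ring of characteristic `p`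
(where by convention `x^{[k]} := 0` for `k ≥ p^n`). -/
def IsIterativeSeq (p n : ℕ) {R : Type*} [Ring R] (x : ℕ → R) : Prop :=
  (∀ k : ℕ, p ^ n ≤ k → x k = 0) ∧
  ∀ i < p ^ n, ∀ j < p ^ n, x i * x j = ((i + j).choose i : R) * x (i + j)

theorem stmt13 {A : Type*} [Ring A] (p : ℕ) (hp : p.Prime) [CharP A p] (n : ℕ)
    -- the inverse of `m!` in `𝔽_p`, transported to `A`
    (finv : ℕ → A) (hfinv : ∀ m : ℕ, finv m =
      ZMod.castHom (dvd_refl p) A ((m.factorial : ZMod p)⁻¹)) :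
    (∀ x : ℕ → A, IsIterativeSeq p n x →
      -- (1) `x^{[i]} = Π_k (x^{[p^k]})^{i_k}/i_k!` for the `p`-adic digits `i_k` of `i`
      (∀ i : ℕ, 1 ≤ i → i < p ^ n →
        x i = ((List.ofFn fun k : Fin n =>
          finv (i / p ^ (k : ℕ) % p) * (x (p ^ (k : ℕ))) ^ (i / p ^ (k : ℕ) % p)).prod)) ∧
      -- (2) `(x^{[p^j]})^p = 0`
      (∀ j < n, (x (p ^ j)) ^ p = 0) ∧
      -- (3) `x^{[0]}·x^{[p^j]} = x^{[p^j]}` and `x^{[0]}·x^{[0]} = x^{[0]}`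
      (∀ j < n, x 0 * x (p ^ j) = x (p ^ j)) ∧ x 0 * x 0 = x 0) ∧
    -- Converse: pairwise commuting elements satisfying (2) and (3) give rise to an
    -- iterative sequence via the formula of (1)
    (∀ (x0 : A) (w : Fin n → A),
      (∀ j, x0 * w j = w j * x0) → (∀ j k, w j * w k = w k * w j) →
      (∀ j, (w j) ^ p = 0) → (∀ j, x0 * w j = w j) → x0 * x0 = x0 →
      ∀ z : ℕ → A, z 0 = x0 →
        (∀ i : ℕ, 1 ≤ i → i < p ^ n →
          z i = ((List.ofFn fun k : Fin n =>
            finv (i / p ^ (k : ℕ) % p) * (w k) ^ (i / p ^ (k : ℕ) % p)).prod)) →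
        (∀ i : ℕ, p ^ n ≤ i → z i = 0) →
        IsIterativeSeq p n z) := by
  haveI : Fact p.Prime := ⟨hp⟩
  have hp1 : 1 < p := hp.one_lt
  have castAC : ∀ a b : ℕ, ((a : ℕ) : ZMod p) = (b : ZMod p) → ((a : ℕ) : A) = (b : A) := by
    intro a b h
    rw [← map_natCast (ZMod.castHom (dvd_refl p) A) a, h, map_natCast]
  have castAC0 : ∀ a : ℕ, ((a : ℕ) : ZMod p) = 0 → ((a : ℕ) : A) = 0 := by
    intro a h
    have := castAC a 0 (by simpa using h)
    simpa using this
  have castAC1 : ∀ a : ℕ, ((a : ℕ) : ZMod p) = 1 → ((a : ℕ) : A) = 1 := by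
    intro a h
    have := castAC a 1 (by simpa using h)
    simpa using this
  have hfinv0 : finv 0 = 1 := by rw [hfinv]; simp
  have hfd : ∀ d : ℕ, d < p → finv d * ((d.factorial : ℕ) : A) = 1 := by
    intro d hd
    rw [hfinv, ← map_natCast (ZMod.castHom (dvd_refl p) A) d.factorial, ← map_mul,
      inv_mul_cancel₀, map_one]
    rw [Ne, ZMod.natCast_eq_zero_iff, hp.dvd_factorial]
    omega
  have hpowlt : ∀ k, k < n → p ^ k < p ^ n := fun k hk => Nat.pow_lt_pow_right hp1 hk
  have harg : ∀ k m : ℕ, k < n → m < p → m * p ^ k < p ^ n := by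
    intro k m hk hm
    calc m * p ^ k < p * p ^ k := by
          have hpk : 0 < p ^ k := by positivity
          exact Nat.mul_lt_mul_of_lt_of_le hm (le_refl _) hpk
    _ = p ^ (k+1) := by rw [pow_succ, mul_comm]
    _ ≤ p ^ n := Nat.pow_le_pow_right (by omega) (by omega)
  constructor
  · -- forward direction
    intro x hx
    obtain ⟨hxtop, hmul⟩ := hx
    have hF1 : ∀ k, k < n → ∀ m, 1 ≤ m → m < p →
        x (p ^ k) ^ m = ((m.factorial : ℕ) : A) * x (m * p ^ k) := by
      intro k hk m
      induction m with
      | zero => omega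
      | succ m ih =>
        intro _ hm1
        rcases Nat.eq_zero_or_pos m with rfl | hmpos
        · simp
        · have ihm := ih hmpos (by omega)
          have hCm : (((m * p ^ k + p ^ k).choose (m * p ^ k) : ℕ) : A) = ((m+1 : ℕ) : A) := by
            apply castAC
            rw [show m * p ^ k + p ^ k = (m+1) * p ^ k from by ring, choose_mul_pow,
              Nat.choose_succ_self_right]
          rw [pow_succ, ihm, mul_assoc,
            hmul (m * p ^ k) (harg k m hk (by omega)) (p ^ k) (hpowlt k hk), hCm,
            ← mul_assoc, show m * p ^ k + p ^ k = (m+1) * p ^ k from by ring]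
          congr 1
          rw [Nat.factorial_succ, Nat.cast_mul]
          exact (Nat.cast_commute m.factorial (((m+1 : ℕ) : ℕ) : A)).eq
    have h2 : ∀ j < n, x (p ^ j) ^ p = 0 := by
      intro j hj
      have e : x (p ^ j) ^ p = x (p ^ j) ^ (p - 1) * x (p ^ j) := by
        rw [← pow_succ]
        congr 1
        omega
      have hC0 : ((((p-1) * p ^ j + p ^ j).choose ((p-1) * p ^ j) : ℕ) : A) = 0 := by
        apply castAC0
        rw [show (p-1) * p ^ j + p ^ j = p * p ^ j from by
            rw [← Nat.succ_mul, show (p-1).succ = p from by omega], choose_mul_pow,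
          Nat.choose_symm (show 1 ≤ p from by omega), Nat.choose_one_right, ZMod.natCast_self]
      rw [e, hF1 j hj (p-1) (by omega) (by omega), mul_assoc,
        hmul ((p-1) * p ^ j) (harg j (p-1) hj (by omega)) (p ^ j) (hpowlt j hj), hC0,
        zero_mul, mul_zero]
    refine ⟨?_, h2, ?_, ?_⟩
    · -- (1)
      have key : ∀ m, m ≤ n → ∀ i, 1 ≤ i → i < p ^ m →
          x i = (List.ofFn fun k : Fin m =>
            finv (i / p ^ (k : ℕ) % p) * (x (p ^ (k : ℕ))) ^ (i / p ^ (k : ℕ) % p)).prod := by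
        intro m
        induction m with
        | zero => intro _ i h1 h2'; simp at h2'; omega
        | succ m ih =>
          intro hmn i hi1 hilt
          have hd : i / p ^ m < p := by
            rw [Nat.div_lt_iff_lt_mul (show 0 < p ^ m from by positivity)]
            rw [mul_comm, ← pow_succ]
            exact hilt
          have hrlt : i % p ^ m < p ^ m := Nat.mod_lt _ (by positivity)
          have hsplit : i % p ^ m + (i / p ^ m) * p ^ m = i := by
            have h := Nat.mod_add_div i (p ^ m)
            rw [mul_comm (p ^ m)] at h
            exact h
          rw [List.ofFn_succ', List.prod_concat]
          simp only [Fin.coe_castSucc, Fin.val_last]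
          have hdigeq : ∀ k : Fin m, i / p ^ (k : ℕ) % p = (i % p ^ m) / p ^ (k : ℕ) % p :=
            fun k => (dig_mod k.isLt i).symm
          rcases Nat.eq_zero_or_pos (i / p ^ m) with hd0 | hdpos
          · -- top digit zero
            have hilt' : i < p ^ m := by
              by_contra hcon
              push_neg at hcon
              have := Nat.div_le_div_right (c := p ^ m) hcon
              rw [Nat.div_self (show 0 < p ^ m from by positivity)] at this
              omega
            rw [hd0]
            simp only [Nat.zero_mod, pow_zero, hfinv0, one_mul, mul_one]
            exact ih (by omega) i hi1 hilt'
          · have hdm : i / p ^ m % p = i / p ^ m := Nat.mod_eq_of_lt hd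
            have hxd : x ((i / p ^ m) * p ^ m) = finv (i / p ^ m) * x (p ^ m) ^ (i / p ^ m) := by
              rw [hF1 m (by omega) (i / p ^ m) hdpos hd, ← mul_assoc, hfd _ hd, one_mul]
            rcases Nat.eq_zero_or_pos (i % p ^ m) with hr0 | hrpos
            · -- i = d * p^m
              have hieq : i = (i / p ^ m) * p ^ m := by omega
              have hpre : (List.ofFn fun k : Fin m =>
                  finv (i / p ^ (k : ℕ) % p) * (x (p ^ (k : ℕ))) ^ (i / p ^ (k : ℕ) % p)).prod
                  = 1 := by
                apply List.prod_eq_one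
                intro a ha
                rw [List.mem_ofFn] at ha
                obtain ⟨k, rfl⟩ := ha
                have hz : i / p ^ (k : ℕ) % p = 0 := by
                  rw [hieq]
                  exact dig_mul_pow (by omega) k.isLt
                simp [hz, hfinv0]
              rw [hpre, one_mul, hdm, ← hxd, ← hieq]
            · -- general case
              have hC1 : (((i % p ^ m + (i / p ^ m) * p ^ m).choose (i % p ^ m) : ℕ) : A)
                  = 1 := by
                apply castAC1
                rw [choose_add_high_digit hrlt hd]
              have hstep : x (i % p ^ m) * x ((i / p ^ m) * p ^ m) = x i := by
                rw [hmul (i % p ^ m) (lt_of_lt_of_le hrlt (Nat.pow_le_pow_right (by omega)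
                  (by omega))) ((i / p ^ m) * p ^ m) (harg m (i / p ^ m) (by omega) hd),
                  hC1, one_mul, hsplit]
              rw [← hstep, hxd, ih (by omega) (i % p ^ m) (by omega) hrlt, hdm]
              congr 1
              apply congrArg
              apply congrArg
              funext k
              rw [hdigeq k]
      exact key n le_rfl
    · intro j hj
      have := hmul 0 (by positivity) (p ^ j) (hpowlt j hj)
      simpa using this
    · have := hmul 0 (by positivity) 0 (by positivity)
      simpa using this
  · -- converse
    intro x0 w hc0 hcw hwp hx0w hx0x0 z hz0 hzform hztop
    refine ⟨hztop, ?_⟩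
    set s : Set A := {x0} ∪ Set.range w with hs
    have hcomm : ∀ a ∈ s, ∀ b ∈ s, a * b = b * a := by
      rintro a (rfl | ⟨j, rfl⟩) b (rfl | ⟨k, rfl⟩)
      · rfl
      · exact hc0 k
      · exact (hc0 j).symm
      · exact hcw j k
    letI hCR : CommRing ↥(Subring.closure s) := Subring.closureCommRingOfComm hcomm
    have hx0mem : x0 ∈ Subring.closure s := Subring.subset_closure (Or.inl rfl)
    have hwmem : ∀ k, w k ∈ Subring.closure s := fun k => Subring.subset_closure (Or.inr ⟨k, rfl⟩)
    set X0 : ↥(Subring.closure s) := ⟨x0, hx0mem⟩ with hX0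
    set W : Fin n → ↥(Subring.closure s) := fun k => ⟨w k, hwmem k⟩ with hW
    have hcoemul : ∀ a b : ↥(Subring.closure s), ((a * b : ↥(Subring.closure s)) : A) = (a : A) * (b : A) :=
      fun a b => rfl
    have hcoepow : ∀ (a : ↥(Subring.closure s)) (e : ℕ),
        ((a ^ e : ↥(Subring.closure s)) : A) = (a : A) ^ e := by
      intro a e
      induction e with
      | zero => rfl
      | succ e ihe => rw [pow_succ, pow_succ, hcoemul, ihe]
    set castS : ZMod p →+* ↥(Subring.closure s) := ZMod.castHom (dvd_refl p) _ with hcastS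
    have hcoe : ∀ c : ZMod p, ((castS c : ↥(Subring.closure s)) : A) = ZMod.castHom (dvd_refl p) A c := by
      intro c
      have he : (Subring.closure s).subtype.comp castS = ZMod.castHom (dvd_refl p) A :=
        RingHom.ext_zmod _ _
      exact RingHom.congr_fun he c
    set F : ℕ → ↥(Subring.closure s) := fun m => castS ((m.factorial : ZMod p)⁻¹) with hF
    have hfinvF : ∀ m, finv m = ((F m : ↥(Subring.closure s)) : A) := by
      intro m
      rw [hfinv]
      exact (hcoe _).symm
    have hnatS : ∀ c : ℕ, ((c : A)) = ((castS ((c : ℕ) : ZMod p) : ↥(Subring.closure s)) : A) := by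
      intro c
      rw [hcoe, map_natCast]
    set Z : ℕ → ↥(Subring.closure s) :=
      fun i => ∏ k : Fin n, F (i / p ^ (k : ℕ) % p) * W k ^ (i / p ^ (k : ℕ) % p) with hZdef
    have hzZ : ∀ i, 1 ≤ i → i < p ^ n → z i = ((Z i : ↥(Subring.closure s)) : A) := by
      intro i h1 h2
      rw [hzform i h1 h2]
      have hZi : ((Z i : ↥(Subring.closure s)) : A)
          = (Subring.closure s).subtype ((List.ofFn fun k : Fin n =>
              F (i / p ^ (k : ℕ) % p) * W k ^ (i / p ^ (k : ℕ) % p)).prod) := by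
        rw [Fin.prod_ofFn]
        rfl
      have hlist : (List.ofFn fun k : Fin n =>
            finv (i / p ^ (k : ℕ) % p) * (w k) ^ (i / p ^ (k : ℕ) % p))
          = List.map (Subring.closure s).subtype (List.ofFn fun k : Fin n =>
              F (i / p ^ (k : ℕ) % p) * W k ^ (i / p ^ (k : ℕ) % p)) := by
        rw [List.map_ofFn]
        apply congrArg List.ofFn
        funext k
        show finv (i / p ^ (k : ℕ) % p) * (w k) ^ (i / p ^ (k : ℕ) % p)
            = ((F (i / p ^ (k : ℕ) % p) * W k ^ (i / p ^ (k : ℕ) % p) : ↥(Subring.closure s)) : A)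
        rw [hcoemul, hcoepow, hfinvF]
      rw [hZi, map_list_prod, hlist]
    -- X0 absorption
    have hX0Wpow : ∀ (k : Fin n) (e : ℕ), 1 ≤ e → X0 * W k ^ e = W k ^ e := by
      intro k e he
      induction e with
      | zero => omega
      | succ e ihe =>
        rcases Nat.eq_zero_or_pos e with rfl | hepos
        · have h1 : X0 * W k = W k := Subtype.ext (by simpa using hx0w k)
          simpa using h1
        · rw [pow_succ, ← mul_assoc, ihe hepos]
    have habs : ∀ i, 1 ≤ i → i < p ^ n → X0 * Z i = Z i := by
      intro i h1 h2
      obtain ⟨k0, hk0n, hk0⟩ := pos_digit_exists hp1 h1 h2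
      show X0 * (∏ k : Fin n, F (i / p ^ (k : ℕ) % p) * W k ^ (i / p ^ (k : ℕ) % p))
          = ∏ k : Fin n, F (i / p ^ (k : ℕ) % p) * W k ^ (i / p ^ (k : ℕ) % p)
      rw [← Finset.mul_prod_erase Finset.univ _ (Finset.mem_univ (⟨k0, hk0n⟩ : Fin n))]
      have h1' : X0 * (F (i / p ^ k0 % p) * W ⟨k0, hk0n⟩ ^ (i / p ^ k0 % p))
          = F (i / p ^ k0 % p) * W ⟨k0, hk0n⟩ ^ (i / p ^ k0 % p) := by
        rw [mul_left_comm, hX0Wpow _ _ (by omega)]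
      rw [← mul_assoc, h1']
    intro i hi j hj
    rcases Nat.eq_zero_or_pos i with rfl | hipos
    · rcases Nat.eq_zero_or_pos j with rfl | hjpos
      · simpa [hz0] using hx0x0
      · simp only [zero_add, Nat.choose_zero_right, Nat.cast_one, one_mul]
        rw [hz0, hzZ j hjpos hj, show x0 = ((X0 : ↥(Subring.closure s)) : A) from rfl,
          ← hcoemul, habs j hjpos hj]
    · rcases Nat.eq_zero_or_pos j with rfl | hjpos
      · simp only [add_zero, Nat.choose_self, Nat.cast_one, one_mul]
        rw [hz0, hzZ i hipos hi, show x0 = ((X0 : ↥(Subring.closure s)) : A) from rfl,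
          ← hcoemul, mul_comm (Z i) X0, habs i hipos hi]
      · by_cases hover : ∀ k, i / p ^ k % p + j / p ^ k % p < p
        · -- carry free
          have hij : i + j < p ^ n := add_lt_of_carryfree hp1 hi hj hover
          have hZmul : Z i * Z j = castS (((i + j).choose i : ℕ) : ZMod p) * Z (i + j) := by
            show (∏ k : Fin n, F (i / p ^ (k : ℕ) % p) * W k ^ (i / p ^ (k : ℕ) % p)) *
                (∏ k : Fin n, F (j / p ^ (k : ℕ) % p) * W k ^ (j / p ^ (k : ℕ) % p))
              = castS (((i + j).choose i : ℕ) : ZMod p) *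
                ∏ k : Fin n, F ((i + j) / p ^ (k : ℕ) % p) * W k ^ ((i + j) / p ^ (k : ℕ) % p)
            rw [← Finset.prod_mul_distrib]
            have hfac : ∀ k : Fin n,
                (F (i / p ^ (k : ℕ) % p) * W k ^ (i / p ^ (k : ℕ) % p)) *
                (F (j / p ^ (k : ℕ) % p) * W k ^ (j / p ^ (k : ℕ) % p)) =
                castS (((i / p ^ (k : ℕ) % p + j / p ^ (k : ℕ) % p).choose
                    (i / p ^ (k : ℕ) % p) : ℕ) : ZMod p) *
                (F ((i + j) / p ^ (k : ℕ) % p) * W k ^ ((i + j) / p ^ (k : ℕ) % p)) := by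
              intro k
              rw [dig_add_of_carryfree hp1 hover (k : ℕ)]
              have hFF : F (i / p ^ (k : ℕ) % p) * F (j / p ^ (k : ℕ) % p)
                  = castS (((i / p ^ (k : ℕ) % p + j / p ^ (k : ℕ) % p).choose
                      (i / p ^ (k : ℕ) % p) : ℕ) : ZMod p) *
                    F (i / p ^ (k : ℕ) % p + j / p ^ (k : ℕ) % p) := by
                rw [hF]
                simp only
                rw [← map_mul, fact_inv_mul_fact_inv (hover (k : ℕ)), map_mul]
              calc (F (i / p ^ (k : ℕ) % p) * W k ^ (i / p ^ (k : ℕ) % p)) *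
                  (F (j / p ^ (k : ℕ) % p) * W k ^ (j / p ^ (k : ℕ) % p))
                  = (F (i / p ^ (k : ℕ) % p) * F (j / p ^ (k : ℕ) % p)) *
                    (W k ^ (i / p ^ (k : ℕ) % p) * W k ^ (j / p ^ (k : ℕ) % p)) := by ring
                _ = _ := by rw [hFF, ← pow_add, mul_assoc]
            rw [Finset.prod_congr rfl (fun k _ => hfac k), Finset.prod_mul_distrib]
            congr 1
            rw [← map_prod]
            apply congrArg
            rw [choose_carryfree hi hj hover, ← Fin.prod_univ_eq_prod_range]
          have hij1 : 1 ≤ i + j := by omega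
          rw [hzZ i hipos hi, hzZ j hjpos hj, hzZ (i + j) hij1 hij, hnatS, ← hcoemul,
            ← hcoemul]
          exact congrArg _ hZmul
        · -- overflow
          push_neg at hover
          obtain ⟨k0, hk0⟩ := hover
          have hk0n : k0 < n := by
            by_contra hcon
            push_neg at hcon
            rw [dig_high (by omega) hi hcon, dig_high (by omega) hj hcon] at hk0
            omega
          have hWp0 : W ⟨k0, hk0n⟩ ^ p = 0 := by
            apply Subtype.ext
            rw [hcoepow]
            simpa using hwp ⟨k0, hk0n⟩
          have hZ0 : Z i * Z j = 0 := by
            show (∏ k : Fin n, F (i / p ^ (k : ℕ) % p) * W k ^ (i / p ^ (k : ℕ) % p)) *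
                (∏ k : Fin n, F (j / p ^ (k : ℕ) % p) * W k ^ (j / p ^ (k : ℕ) % p)) = 0
            rw [← Finset.prod_mul_distrib]
            apply Finset.prod_eq_zero (Finset.mem_univ (⟨k0, hk0n⟩ : Fin n))
            have hW0 : W ⟨k0, hk0n⟩ ^ (i / p ^ k0 % p + j / p ^ k0 % p) = 0 :=
              pow_eq_zero_of_le hk0 hWp0
            calc (F (i / p ^ k0 % p) * W ⟨k0, hk0n⟩ ^ (i / p ^ k0 % p)) *
                (F (j / p ^ k0 % p) * W ⟨k0, hk0n⟩ ^ (j / p ^ k0 % p))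
                = (F (i / p ^ k0 % p) * F (j / p ^ k0 % p)) *
                  W ⟨k0, hk0n⟩ ^ (i / p ^ k0 % p + j / p ^ k0 % p) := by
                  rw [pow_add]; ring
              _ = 0 := by rw [hW0, mul_zero]
          have hC0 : (((i + j).choose i : ℕ) : A) = 0 := castAC0 _ (choose_overflow hk0)
          rw [hzZ i hipos hi, hzZ j hjpos hj, hC0, zero_mul, ← hcoemul, hZ0]
          rfl
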